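/- arXiv:math/9402212 — 2 statements merged into one kernel-verified Lean document; each statement's English description precedes it below -/
import Mathlib

section
/- The Askey-Wilson divided difference operator D_q satisfies D_q Ψ_n = 2 q^{(1−n)/2} · (1−q^n)/(1−q) · Ψ_{n−1} for all n ≥ 1, where Ψ_n(cos θ) = i^n (i q^{(1−n)/2} e^{iθ};q)_n (i q^{(1−n)/2} e^{−iθ};q)_n. -/
noncomputable section

open Complex

def qPochC (a p : ℂ) (n : ℕ) : ℂ := ∏ j ∈ Finset.range n, (1 - a * p ^ j)

/-- `g_n(z) = i^n ∏_{j<n}(1 - i q^{(1-n)/2} z q^j) ∏_{j<n}(1 - i q^{(1-n)/2} z⁻¹ q^j)`,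
so that `Ψ_n(cos θ) = g_n(e^{iθ})`.  Here `q^{(1-n)/2} = (√q)^{1-n}`. -/
def gPsi (q : ℝ) (n : ℕ) (z : ℂ) : ℂ :=
  I ^ n * qPochC (I * ((Real.sqrt q : ℂ) ^ (1 - (n : ℤ))) * z) (q : ℂ) n *
    qPochC (I * ((Real.sqrt q : ℂ) ^ (1 - (n : ℤ))) * z⁻¹) (q : ℂ) n

lemma qPochC_zpow (s w : ℂ) (hs : s ≠ 0) (c : ℤ) (n : ℕ) :
    qPochC (w * s ^ c) (s ^ 2) n = ∏ j ∈ Finset.range n, (1 - w * s ^ (c + 2 * (j : ℤ))) := by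
  refine Finset.prod_congr rfl fun j _ => ?_
  rw [zpow_add₀ hs, show (2 * (j : ℤ)) = ((2 * j : ℕ) : ℤ) by push_cast; ring,
    zpow_natCast, pow_mul]
  ring

lemma bracketAW (z v u w : ℂ) :
    I * ((1 - I * z * u) * (1 - I * v * w) - (1 - I * z * w) * (1 - I * v * u))
      = (z - v) * (u - w) := by
  linear_combination (-(z - v) * (u - w)) * Complex.I_sq

/-- The Askey–Wilson divided-difference rule `D_q Ψ_n = 2 q^{(1-n)/2} (1-q^n)/(1-q) Ψ_{n-1}`,
stated at `x = cos θ`, `z = e^{iθ}` with `e^{iθ} ≠ e^{-iθ}`. -/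
theorem askeyWilson_Psi (q : ℝ) (hq0 : 0 < q) (hq1 : q < 1) (n : ℕ) (hn : 1 ≤ n)
    (θ : ℝ) (hz : Complex.exp (θ * I) - Complex.exp (-θ * I) ≠ 0) :
    (gPsi q n ((Real.sqrt q : ℂ) * Complex.exp (θ * I)) -
        gPsi q n (((Real.sqrt q : ℂ))⁻¹ * Complex.exp (θ * I))) /
      (((Real.sqrt q : ℂ) - ((Real.sqrt q : ℂ))⁻¹) *
        (Complex.exp (θ * I) - Complex.exp (-θ * I)) / 2) =
      2 * ((Real.sqrt q : ℂ) ^ (1 - (n : ℤ))) * (1 - (q : ℂ) ^ n) / (1 - (q : ℂ)) *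
        gPsi q (n - 1) (Complex.exp (θ * I)) := by

  obtain ⟨m, rfl⟩ : ∃ m, n = m + 1 := ⟨n - 1, by omega⟩
  set s : ℂ := (Real.sqrt q : ℂ) with hsdef
  set z : ℂ := Complex.exp (θ * I) with hzdef
  have hsr : Real.sqrt q ≠ 0 := by positivity
  have hs : s ≠ 0 := Complex.ofReal_ne_zero.mpr hsr
  have hsq : s ^ 2 = (q : ℂ) := by
    rw [hsdef]; norm_cast; exact Real.sq_sqrt hq0.le
  have hz0 : z ≠ 0 := Complex.exp_ne_zero _
  have hzinv : Complex.exp (-θ * I) = z⁻¹ := by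
    rw [hzdef, ← Complex.exp_neg]; ring_nf
  have hq1' : (q : ℂ) ≠ 1 := by
    exact_mod_cast ne_of_lt hq1
  have hs2 : (1 : ℂ) - s ^ 2 ≠ 0 := by
    rw [hsq]; exact sub_ne_zero.mpr (Ne.symm hq1')
  have hzz : z - z⁻¹ ≠ 0 := by rwa [hzinv] at hz
  have hss : s - s⁻¹ ≠ 0 := by
    intro h
    apply hs2
    field_simp at h
    linear_combination -h
  have hsm : s ^ (m + 1) ≠ 0 := pow_ne_zero _ hs
  have hsm' : s ^ m ≠ 0 := pow_ne_zero _ hs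
  -- the common products
  set CA : ℂ := ∏ j ∈ Finset.range m, (1 - I * z * s ^ ((1 : ℤ) - m + 2 * (j : ℤ))) with hCA
  set CB : ℂ := ∏ j ∈ Finset.range m, (1 - I * z⁻¹ * s ^ ((1 : ℤ) - m + 2 * (j : ℤ))) with hCB
  -- rewrite the four qPochC arguments
  have e1 : I * s ^ (1 - ((m + 1 : ℕ) : ℤ)) * (s * z) = I * z * s ^ ((1 : ℤ) - m) := by
    rw [show ((1 : ℤ) - m) = (1 - ((m + 1 : ℕ) : ℤ)) + 1 by push_cast; ring,
      zpow_add₀ hs, zpow_one]; ring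
  have e2 : I * s ^ (1 - ((m + 1 : ℕ) : ℤ)) * (s * z)⁻¹ = I * z⁻¹ * s ^ (-(m : ℤ) - 1) := by
    rw [mul_inv, show (-(m : ℤ) - 1) = (1 - ((m + 1 : ℕ) : ℤ)) + (-1) by push_cast; ring,
      zpow_add₀ hs, zpow_neg_one]; ring
  have e3 : I * s ^ (1 - ((m + 1 : ℕ) : ℤ)) * (s⁻¹ * z) = I * z * s ^ (-(m : ℤ) - 1) := by
    rw [show (-(m : ℤ) - 1) = (1 - ((m + 1 : ℕ) : ℤ)) + (-1) by push_cast; ring,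
      zpow_add₀ hs, zpow_neg_one]; ring
  have e4 : I * s ^ (1 - ((m + 1 : ℕ) : ℤ)) * (s⁻¹ * z)⁻¹ = I * z⁻¹ * s ^ ((1 : ℤ) - m) := by
    rw [mul_inv, inv_inv, show ((1 : ℤ) - m) = (1 - ((m + 1 : ℕ) : ℤ)) + 1 by push_cast; ring,
      zpow_add₀ hs, zpow_one]; ring
  -- split-last product (c = 1 - m)
  have hlast : ∀ w : ℂ, (∏ j ∈ Finset.range (m + 1), (1 - w * s ^ ((1 : ℤ) - m + 2 * (j : ℤ))))
      = (∏ j ∈ Finset.range m, (1 - w * s ^ ((1 : ℤ) - m + 2 * (j : ℤ)))) * (1 - w * s ^ (m + 1)) := by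
    intro w
    rw [Finset.prod_range_succ,
      show ((1 : ℤ) - m + 2 * (m : ℤ)) = ((m + 1 : ℕ) : ℤ) by push_cast; ring, zpow_natCast]
  -- split-first product (c = -m - 1)
  have hfirst : ∀ w : ℂ, (∏ j ∈ Finset.range (m + 1), (1 - w * s ^ (-(m : ℤ) - 1 + 2 * (j : ℤ))))
      = (∏ j ∈ Finset.range m, (1 - w * s ^ ((1 : ℤ) - m + 2 * (j : ℤ)))) * (1 - w * (s ^ (m + 1))⁻¹) := by
    intro w
    rw [Finset.prod_range_succ']
    congr 1
    · refine Finset.prod_congr rfl fun j _ => ?_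
      rw [show (-(m : ℤ) - 1 + 2 * ((j + 1 : ℕ) : ℤ)) = ((1 : ℤ) - m + 2 * (j : ℤ)) by push_cast; ring]
    · rw [show (-(m : ℤ) - 1 + 2 * ((0 : ℕ) : ℤ)) = -((m + 1 : ℕ) : ℤ) by push_cast; ring,
        zpow_neg, zpow_natCast]
  -- the numerator
  have hnum : gPsi q (m + 1) (s * z) - gPsi q (m + 1) (s⁻¹ * z)
      = I ^ m * CA * CB * ((z - z⁻¹) * (s ^ (m + 1) - (s ^ (m + 1))⁻¹)) := by
    unfold gPsi
    rw [← hsdef, e1, e2, e3, e4, ← hsq, qPochC_zpow _ _ hs, qPochC_zpow _ _ hs,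
      qPochC_zpow _ _ hs, qPochC_zpow _ _ hs, hlast, hlast, hfirst, hfirst, ← hCA, ← hCB]
    have hbr := bracketAW z z⁻¹ (s ^ (m + 1)) ((s ^ (m + 1))⁻¹)
    linear_combination (I ^ m * CA * CB) * hbr
  -- the right-hand gPsi
  have hC : gPsi q m z = I ^ m * CA * CB := by
    unfold gPsi
    rw [← hsdef, ← hsq,
      show I * s ^ (1 - (m : ℤ)) * z = I * z * s ^ ((1 : ℤ) - m) by ring,
      show I * s ^ (1 - (m : ℤ)) * z⁻¹ = I * z⁻¹ * s ^ ((1 : ℤ) - m) by ring,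
      qPochC_zpow _ _ hs, qPochC_zpow _ _ hs, ← hCA, ← hCB]
  have eR1 : s ^ (1 - ((m + 1 : ℕ) : ℤ)) = (s ^ m)⁻¹ := by
    rw [show (1 - ((m + 1 : ℕ) : ℤ)) = -((m : ℕ) : ℤ) by push_cast; ring, zpow_neg, zpow_natCast]
  have eR2 : (q : ℂ) ^ (m + 1) = (s ^ (m + 1)) ^ 2 := by
    rw [← hsq, ← pow_mul, ← pow_mul, mul_comm]
  have key : ((z - z⁻¹) * (s ^ (m + 1) - (s ^ (m + 1))⁻¹)) / ((s - s⁻¹) * (z - z⁻¹) / 2)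
      = 2 * (s ^ m)⁻¹ * (1 - (s ^ (m + 1)) ^ 2) / (1 - s ^ 2) := by
    have hden : (s - s⁻¹) * (z - z⁻¹) / 2 ≠ 0 :=
      div_ne_zero (mul_ne_zero hss hzz) two_ne_zero
    rw [div_eq_div_iff hden hs2]
    field_simp
    ring
  rw [show m + 1 - 1 = m from rfl, hzinv, hnum, hC, eR1, eR2, ← hsq, mul_div_assoc, key]
  ring
end
end

section
/- The Askey-Wilson operator satisfies D_q[x·Ψ_n(x)] = (q^{(1+n)/2} − q^{−(n+1)/2})/(q^{1/2} − q^{−1/2}) · 2x · Ψ_{n−1}(x) for all n ≥ 1. -/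
noncomputable section

open Complex

/-- `g` for the function `x ↦ x Ψ_n(x)`: `z ↦ ((z+z⁻¹)/2) g_n(z)`. -/
def gxPsi (q : ℝ) (n : ℕ) (z : ℂ) : ℂ := ((z + z⁻¹) / 2) * gPsi q n z

lemma qPochC_succ (a p : ℂ) (m : ℕ) :
    qPochC a p (m+1) = qPochC a p m * (1 - a * p ^ m) := Finset.prod_range_succ _ _

lemma qPochC_succ' (a p : ℂ) (m : ℕ) :
    qPochC a p (m+1) = (1 - a) * qPochC (a*p) p m := by
  rw [qPochC, Finset.prod_range_succ']
  simp only [pow_zero, mul_one, qPochC]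
  rw [mul_comm]
  congr 1
  refine Finset.prod_congr rfl fun j _ => ?_
  ring

lemma micro (S w : ℂ) (hS : S ≠ 0) (hw : w ≠ 0) :
    I * ((1 - I*S*w) * (1 - I*S⁻¹*w⁻¹)) = S*w + S⁻¹*w⁻¹ := by
  have h1 : S * S⁻¹ = 1 := mul_inv_cancel₀ hS
  have h2 : w * w⁻¹ = 1 := mul_inv_cancel₀ hw
  linear_combination (-(S*w) - S⁻¹*w⁻¹ + I*S*S⁻¹*w*w⁻¹) * Complex.I_mul_I - I*w*w⁻¹*h1 - I*h2

lemma numer (s S z A B : ℂ) (hS : S ≠ 0) (hz0 : z ≠ 0) (m : ℕ) :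
    ((s*z + (s*z)⁻¹)/2) * (I^(m+1) * (A * (1 - I*S*z)) * ((1 - I*S⁻¹*z⁻¹) * B))
    - ((s⁻¹*z + (s⁻¹*z)⁻¹)/2) * (I^(m+1) * ((1 - I*S⁻¹*z) * A) * (B * (1 - I*S*z⁻¹)))
    = (s*S - (s*S)⁻¹) * ((z+z⁻¹)*(z-z⁻¹)/2) * (I^m * A * B) := by
  have h1 := micro S z hS hz0
  have h2 := micro S z⁻¹ hS (inv_ne_zero hz0)
  rw [inv_inv] at h2
  calc ((s*z + (s*z)⁻¹)/2) * (I^(m+1) * (A * (1 - I*S*z)) * ((1 - I*S⁻¹*z⁻¹) * B))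
      - ((s⁻¹*z + (s⁻¹*z)⁻¹)/2) * (I^(m+1) * ((1 - I*S⁻¹*z) * A) * (B * (1 - I*S*z⁻¹)))
      = ((s*z + (s*z)⁻¹)/2) * (I^m * (I*((1 - I*S*z) * (1 - I*S⁻¹*z⁻¹))) * A * B)
      - ((s⁻¹*z + (s⁻¹*z)⁻¹)/2) * (I^m * (I*((1 - I*S*z⁻¹) * (1 - I*S⁻¹*z))) * A * B) := by
        rw [pow_succ]; ring
    _ = ((s*z + (s*z)⁻¹)/2) * (I^m * (S*z + S⁻¹*z⁻¹) * A * B)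
      - ((s⁻¹*z + (s⁻¹*z)⁻¹)/2) * (I^m * (S*z⁻¹ + S⁻¹*z) * A * B) := by rw [h1, h2]
    _ = (s*S - (s*S)⁻¹) * ((z+z⁻¹)*(z-z⁻¹)/2) * (I^m * A * B) := by
        simp only [mul_inv, inv_inv]; ring

lemma finalDiv (s S z P : ℂ) (hs0 : s ≠ 0) (hz0 : z ≠ 0) (hS0 : S ≠ 0)
    (hzz : z - z⁻¹ ≠ 0) (hss : s - s⁻¹ ≠ 0) :
    ((s*S - (s*S)⁻¹) * ((z+z⁻¹)*(z-z⁻¹)/2) * P) / ((s - s⁻¹)*(z - z⁻¹)/2)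
    = ((s*S - (s*S)⁻¹)/(s - s⁻¹)) * (2*((z+z⁻¹)/2)) * P := by
  have hD : (s - s⁻¹) * (z - z⁻¹) / 2 ≠ 0 := by
    apply div_ne_zero (mul_ne_zero hss hzz) two_ne_zero
  rw [div_eq_iff hD]
  have hc : (s - s⁻¹)⁻¹ * (s - s⁻¹) = 1 := inv_mul_cancel₀ hss
  linear_combination (-((s*S - (s*S)⁻¹) * ((z+z⁻¹)*(z-z⁻¹)/2) * P)) * hc

/-- `D_q [x Ψ_n(x)] = (q^{(1+n)/2} - q^{-(n+1)/2})/(q^{1/2} - q^{-1/2}) · 2x · Ψ_{n-1}(x)`,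
stated at `x = cos θ`, `z = e^{iθ}` with `e^{iθ} ≠ e^{-iθ}`. -/
theorem askeyWilson_x_mul_Psi (q : ℝ) (hq0 : 0 < q) (hq1 : q < 1) (n : ℕ) (hn : 1 ≤ n)
    (θ : ℝ) (hz : Complex.exp (θ * I) - Complex.exp (-θ * I) ≠ 0) :
    (gxPsi q n ((Real.sqrt q : ℂ) * Complex.exp (θ * I)) -
        gxPsi q n (((Real.sqrt q : ℂ))⁻¹ * Complex.exp (θ * I))) /
      (((Real.sqrt q : ℂ) - ((Real.sqrt q : ℂ))⁻¹) *
        (Complex.exp (θ * I) - Complex.exp (-θ * I)) / 2) =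
      (((Real.sqrt q : ℂ) ^ (1 + (n : ℤ)) - ((Real.sqrt q : ℂ)) ^ (-(1 + (n : ℤ)))) /
          ((Real.sqrt q : ℂ) - ((Real.sqrt q : ℂ))⁻¹)) *
        (2 * (Real.cos θ : ℂ)) * gPsi q (n - 1) (Complex.exp (θ * I)) := by
  obtain ⟨m, rfl⟩ : ∃ m, n = m + 1 := ⟨n - 1, (Nat.succ_pred_eq_of_pos hn).symm⟩
  set s : ℂ := ((Real.sqrt q : ℝ) : ℂ) with hs
  have hsR : (0:ℝ) < Real.sqrt q := Real.sqrt_pos.2 hq0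
  have hs0 : s ≠ 0 := by
    simp only [hs, ne_eq, Complex.ofReal_eq_zero]; exact ne_of_gt hsR
  have hs2 : s ^ 2 = (q : ℂ) := by
    rw [hs, ← Complex.ofReal_pow, Real.sq_sqrt hq0.le]
  set z : ℂ := Complex.exp (θ * I) with hzdef
  have hz0 : z ≠ 0 := Complex.exp_ne_zero _
  have hexp : Complex.exp (-θ * I) = z⁻¹ := by
    rw [hzdef, ← Complex.exp_neg]; ring_nf
  have hzz : z - z⁻¹ ≠ 0 := by rw [← hexp]; exact hz
  have hss : s - s⁻¹ ≠ 0 := by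
    intro h
    have h1 : s = s⁻¹ := sub_eq_zero.1 h
    have h2 : s ^ 2 = 1 := by
      rw [pow_two]; nth_rewrite 1 [h1]; exact inv_mul_cancel₀ hs0
    rw [hs2] at h2
    have : q = 1 := by exact_mod_cast h2
    linarith
  have hcos : (Real.cos θ : ℂ) = (z + z⁻¹)/2 := by
    rw [← hexp, Complex.ofReal_cos, hzdef, Complex.exp_mul_I, Complex.exp_mul_I,
      Complex.cos_neg, Complex.sin_neg]
    ring
  set w : ℂ := s ^ m with hw
  have hw0 : w ≠ 0 := pow_ne_zero _ hs0
  set S : ℂ := w * s with hS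
  have hS0 : S ≠ 0 := mul_ne_zero hw0 hs0
  set u : ℂ := s * w⁻¹ with hu
  have hv : s ^ (1 - ((m+1 : ℕ) : ℤ)) = w⁻¹ := by
    have : (1 - ((m+1 : ℕ) : ℤ)) = -(m : ℤ) := by push_cast; ring
    rw [this, zpow_neg, zpow_natCast, hw]
  have hu' : s ^ (1 - (m : ℤ)) = u := by
    have : (1 - (m : ℤ)) = 1 + (-(m:ℤ)) := by ring
    rw [this, zpow_add₀ hs0, zpow_one, zpow_neg, zpow_natCast, hu, hw]
  have hqm : (q : ℂ) ^ m = w ^ 2 := by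
    rw [← hs2, hw, ← pow_mul, ← pow_mul, mul_comm]
  -- The four q-Pochhammer factorizations
  have E1 : qPochC (I * s ^ (1 - ((m+1 : ℕ) : ℤ)) * (s * z)) (q : ℂ) (m+1)
      = qPochC (I * u * z) (q : ℂ) m * (1 - I*S*z) := by
    rw [hv]
    have ha : I * w⁻¹ * (s * z) = I * u * z := by rw [hu]; ring
    rw [ha, qPochC_succ, hqm]
    congr 2
    rw [hu, hS]
    field_simp
  have E2 : qPochC (I * s ^ (1 - ((m+1 : ℕ) : ℤ)) * (s * z)⁻¹) (q : ℂ) (m+1)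
      = (1 - I*S⁻¹*z⁻¹) * qPochC (I * u * z⁻¹) (q : ℂ) m := by
    rw [hv]
    have ha : I * w⁻¹ * (s * z)⁻¹ = I * S⁻¹ * z⁻¹ := by
      rw [hS, mul_inv, mul_inv]; ring
    rw [ha, qPochC_succ']
    congr 2
    rw [hu, hS, ← hs2, mul_inv]
    field_simp
  have E3 : qPochC (I * s ^ (1 - ((m+1 : ℕ) : ℤ)) * (s⁻¹ * z)) (q : ℂ) (m+1)
      = (1 - I*S⁻¹*z) * qPochC (I * u * z) (q : ℂ) m := by
    rw [hv]
    have ha : I * w⁻¹ * (s⁻¹ * z) = I * S⁻¹ * z := by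
      rw [hS, mul_inv]; ring
    rw [ha, qPochC_succ']
    congr 2
    rw [hu, hS, ← hs2, mul_inv]
    field_simp
  have E4 : qPochC (I * s ^ (1 - ((m+1 : ℕ) : ℤ)) * (s⁻¹ * z)⁻¹) (q : ℂ) (m+1)
      = qPochC (I * u * z⁻¹) (q : ℂ) m * (1 - I*S*z⁻¹) := by
    rw [hv]
    have ha : I * w⁻¹ * (s⁻¹ * z)⁻¹ = I * u * z⁻¹ := by
      rw [hu, mul_inv, inv_inv]; ring
    rw [ha, qPochC_succ, hqm]
    congr 2
    rw [hu, hS]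
    field_simp
  have hRHScoef1 : s ^ (1 + ((m+1 : ℕ) : ℤ)) = s * S := by
    have : (1 + ((m+1 : ℕ) : ℤ)) = ((m + 2 : ℕ) : ℤ) := by push_cast; ring
    rw [this, zpow_natCast, hS, hw]
    ring
  have hRHScoef2 : s ^ (-(1 + ((m+1 : ℕ) : ℤ))) = (s * S)⁻¹ := by
    rw [zpow_neg, hRHScoef1]
  rw [hRHScoef1, hRHScoef2, hexp]
  have hm1 : (m + 1) - 1 = m := rfl
  rw [hm1]
  unfold gxPsi gPsi
  rw [E1, E2, E3, E4, hu', hcos]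
  rw [numer s S z _ _ hS0 hz0 m]
  exact finalDiv s S z _ hs0 hz0 hS0 hzz hss
end
end
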